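/- arXiv:1908.09618 — 4 statements merged into one kernel-verified Lean document; each statement's English description precedes it below -/
import Mathlib

section
/- For all integers i, j ≥ 1, setting ψ = ⌈i/2⌉ - 1 and φ = ⌈(j + ψ)/2⌉ - 1, there exist i', j' ∈ {1, 2} such that (i, j) = (i', j') + φ·(0, 2) + ψ·(2, -1); moreover φ ≥ 0 and ψ ≥ 0. -/
lemma ceil2 (n : ℤ) : ⌈(n:ℚ)/2⌉ = (n+1)/2 := by
  rw [Int.ceil_eq_iff]
  constructor
  · rw [sub_lt_iff_lt_add, show ((n:ℚ)/2 + 1) = ((n:ℚ)+2)/2 by ring,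
      lt_div_iff₀ (by norm_num)]
    have : ((n+1)/2 : ℤ) * 2 < n + 2 := by omega
    exact_mod_cast this
  · rw [div_le_iff₀ (by norm_num)]
    have : n ≤ ((n+1)/2 : ℤ) * 2 := by omega
    exact_mod_cast this

theorem stmt_6 (i j : ℤ) (hi : 1 ≤ i) (hj : 1 ≤ j) :
    let ψ : ℤ := ⌈(i : ℚ)/2⌉ - 1
    let φ : ℤ := ⌈((j + ψ : ℤ) : ℚ)/2⌉ - 1
    ∃ i' j' : ℤ, i' ∈ ({1, 2} : Set ℤ) ∧ j' ∈ ({1, 2} : Set ℤ) ∧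
      i = i' + φ * 0 + ψ * 2 ∧ j = j' + φ * 2 + ψ * (-1) ∧
      0 ≤ φ ∧ 0 ≤ ψ := by
  intro ψ φ
  have hψ : ψ = (i+1)/2 - 1 := by unfold ψ; rw [ceil2]
  have hφ : φ = (j + ψ + 1)/2 - 1 := by unfold φ; rw [ceil2]
  refine ⟨i - 2*ψ, j + ψ - 2*φ, ?_, ?_, by ring, by ring, by omega, by omega⟩ <;>
    simp only [Set.mem_insert_iff, Set.mem_singleton_iff] <;> omega
end

section
/- Let J = {(i,j) : i,j ∈ {1,2,3}} ∪ {(4,2),(2,5)}. For all integers i, j ≥ 1 with (i,j) ∉ J ∪ {(6,1)}, there exist integers φ, ψ ≥ 0 and (i',j') ∈ J \ {(1,1),(1,3),(3,2)} such that (i,j) = (i',j') + φ·(-1,3) + ψ·(3,-1). -/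
theorem stmt_8 (i j : ℤ) (hi : 1 ≤ i) (hj : 1 ≤ j)
    (J : Set (ℤ × ℤ))
    (hJ : J = {(1,1),(1,2),(1,3),(2,1),(2,2),(2,3),(3,1),(3,2),(3,3),(4,2),(2,5)})
    (hnot : (i, j) ∉ J ∪ {((6 : ℤ), (1 : ℤ))}) :
    ∃ φ ψ : ℤ, 0 ≤ φ ∧ 0 ≤ ψ ∧
      ∃ p ∈ J \ {((1 : ℤ), (1 : ℤ)), ((1 : ℤ), (3 : ℤ)), ((3 : ℤ), (2 : ℤ))},
        i = p.1 + φ * (-1) + ψ * 3 ∧ j = p.2 + φ * 3 + ψ * (-1) := by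
  subst hJ
  simp only [Set.union_singleton, Set.mem_insert_iff, Set.mem_singleton_iff,
    Prod.mk.injEq, not_or] at hnot
  have h61 := hnot.1
  have h11 := hnot.2.1
  have h13 := hnot.2.2.2.1
  have h32 := hnot.2.2.2.2.2.2.2.2.1
  clear hnot
  have e11a : 3*i + j ≠ 4 := by rcases not_and_or.mp h11 with h | h <;> omega
  have e11b : i + 3*j ≠ 4 := by rcases not_and_or.mp h11 with h | h <;> omega
  have e13 : 3*i + j ≠ 6 := by rcases not_and_or.mp h13 with h | h <;> omega
  have e9 : i + 3*j ≠ 9 := by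
    rcases not_and_or.mp h32 with h | h <;> rcases not_and_or.mp h61 with h' | h' <;> omega
  clear h61 h11 h13 h32
  have hr : (3*i+j) % 8 = 0 ∨ (3*i+j) % 8 = 1 ∨ (3*i+j) % 8 = 2 ∨ (3*i+j) % 8 = 3 ∨
      (3*i+j) % 8 = 4 ∨ (3*i+j) % 8 = 5 ∨ (3*i+j) % 8 = 6 ∨ (3*i+j) % 8 = 7 := by omega
  rcases hr with h | h | h | h | h | h | h | h
  · exact ⟨(i+3*j-8)/8, (3*i+j-8)/8, by omega, by omega, (2,2), by simp, by omega, by omega⟩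
  · exact ⟨(i+3*j-11)/8, (3*i+j-9)/8, by omega, by omega, (2,3), by simp, by omega, by omega⟩
  · exact ⟨(i+3*j-6)/8, (3*i+j-10)/8, by omega, by omega, (3,1), by simp, by omega, by omega⟩
  · exact ⟨(i+3*j-17)/8, (3*i+j-11)/8, by omega, by omega, (2,5), by simp, by omega, by omega⟩
  · exact ⟨(i+3*j-12)/8, (3*i+j-12)/8, by omega, by omega, (3,3), by simp, by omega, by omega⟩
  · exact ⟨(i+3*j-7)/8, (3*i+j-5)/8, by omega, by omega, (1,2), by simp, by omega, by omega⟩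
  · exact ⟨(i+3*j-10)/8, (3*i+j-14)/8, by omega, by omega, (4,2), by simp, by omega, by omega⟩
  · exact ⟨(i+3*j-5)/8, (3*i+j-7)/8, by omega, by omega, (2,1), by simp, by omega, by omega⟩
end

section
/- Consider the mixing rewriting relation on finite multisets of rationals (replacing two elements a, b by two copies of (a+b)/2). Let M₀ be the multiset consisting of i copies of 0 and j copies of 1. If a multiset M reachable from M₀ contains an element c with 0 < c < 2^{-γ} for some integer γ ≥ 0, then i ≥ γ + 1. -/
def MixStep (M N : Multiset ℚ) : Prop :=
  ∃ a b : ℚ, ∃ R : Multiset ℚ,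
    M = a ::ₘ b ::ₘ R ∧ N = (a + b)/2 ::ₘ (a + b)/2 ::ₘ R

/-- The key invariant: every element is 0 or at least `2^(z - i)` where `z` is the
number of zeros in the multiset. -/
def MixInv (i : ℕ) (M : Multiset ℚ) : Prop :=
  ∀ x ∈ M, x = 0 ∨ (2:ℚ)^((M.count 0 : ℤ) - i) ≤ x

lemma inv_step (i : ℕ) {M N : Multiset ℚ} (hMN : MixStep M N) (hM : MixInv i M) : MixInv i N := by
  obtain ⟨a, b, R, rfl, rfl⟩ := hMN
  have ha := hM a (by simp)
  have hb := hM b (by simp)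
  have hR : ∀ x ∈ R, x = 0 ∨ (2:ℚ)^(((a ::ₘ b ::ₘ R).count 0 : ℤ) - i) ≤ x := by
    intro x hx; exact hM x (by simp [hx])
  set m := (a + b)/2 with hm
  by_cases ha0 : a = 0 <;> by_cases hb0 : b = 0
  · -- both zero
    subst ha0; subst hb0
    have : m = 0 := by simp [hm]
    rw [this]
    intro x hx
    have hcount : ((0:ℚ) ::ₘ (0:ℚ) ::ₘ R).count 0 = ((0:ℚ) ::ₘ (0:ℚ) ::ₘ R).count 0 := rfl
    simp only [Multiset.mem_cons] at hx
    rcases hx with rfl | rfl | hx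
    · left; rfl
    · left; rfl
    · exact hR x hx
  · -- a = 0, b ≠ 0
    subst ha0
    have hbge : (2:ℚ)^((((0:ℚ) ::ₘ b ::ₘ R).count 0 : ℤ) - i) ≤ b := (hb.resolve_left hb0)
    have hz : (((0:ℚ) ::ₘ b ::ₘ R).count 0 : ℤ) = R.count 0 + 1 := by
      simp only [Multiset.count_cons]
      rw [if_neg (show ¬(0:ℚ) = b from fun h => hb0 h.symm)]
      simp
    have hmpos : 0 < m := by
      have h2 : (0:ℚ) < 2^((((0:ℚ) ::ₘ b ::ₘ R).count 0 : ℤ) - i) := by positivity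
      have hbpos : 0 < b := lt_of_lt_of_le h2 hbge
      simp only [hm]; linarith
    have hzN : ((m ::ₘ m ::ₘ R).count 0 : ℤ) = R.count 0 := by
      simp only [Multiset.count_cons]
      rw [if_neg hmpos.ne]
      simp
    intro x hx
    simp only [Multiset.mem_cons] at hx
    have hmge : (2:ℚ)^(((m ::ₘ m ::ₘ R).count 0 : ℤ) - i) ≤ m := by
      rw [hzN]
      have : (2:ℚ)^((R.count 0 : ℤ) - i) = 2^(((R.count 0 : ℤ) + 1) - i) / 2 := by
        rw [show ((R.count 0 : ℤ) + 1) - i = ((R.count 0 : ℤ) - i) + 1 from by ring,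
          zpow_add_one₀ (by norm_num : (2:ℚ) ≠ 0)]; ring
      rw [this]
      rw [hz] at hbge
      simp only [hm]; linarith
    rcases hx with rfl | rfl | hx
    · right; exact hmge
    · right; exact hmge
    · rcases hR x hx with h0 | hge
      · left; exact h0
      · right
        refine le_trans (zpow_le_zpow_right₀ (by norm_num) ?_) hge
        rw [hzN, hz]; omega
  · -- b = 0, a ≠ 0 (symmetric)
    subst hb0
    have hage : (2:ℚ)^(((a ::ₘ (0:ℚ) ::ₘ R).count 0 : ℤ) - i) ≤ a := (ha.resolve_left ha0)
    have hz : ((a ::ₘ (0:ℚ) ::ₘ R).count 0 : ℤ) = R.count 0 + 1 := by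
      simp only [Multiset.count_cons]
      rw [if_neg (show ¬(0:ℚ) = a from fun h => ha0 h.symm)]
      simp
    have hmpos : 0 < m := by
      have h2 : (0:ℚ) < 2^(((a ::ₘ (0:ℚ) ::ₘ R).count 0 : ℤ) - i) := by positivity
      have hapos : 0 < a := lt_of_lt_of_le h2 hage
      simp only [hm]; linarith
    have hzN : ((m ::ₘ m ::ₘ R).count 0 : ℤ) = R.count 0 := by
      simp only [Multiset.count_cons]
      rw [if_neg hmpos.ne]
      simp
    intro x hx
    simp only [Multiset.mem_cons] at hx
    have hmge : (2:ℚ)^(((m ::ₘ m ::ₘ R).count 0 : ℤ) - i) ≤ m := by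
      rw [hzN]
      have : (2:ℚ)^((R.count 0 : ℤ) - i) = 2^(((R.count 0 : ℤ) + 1) - i) / 2 := by
        rw [show ((R.count 0 : ℤ) + 1) - i = ((R.count 0 : ℤ) - i) + 1 from by ring,
          zpow_add_one₀ (by norm_num : (2:ℚ) ≠ 0)]; ring
      rw [this]
      rw [hz] at hage
      simp only [hm]; linarith
    rcases hx with rfl | rfl | hx
    · right; exact hmge
    · right; exact hmge
    · rcases hR x hx with h0 | hge
      · left; exact h0
      · right
        refine le_trans (zpow_le_zpow_right₀ (by norm_num) ?_) hge
        rw [hzN, hz]; omega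
  · -- both nonzero
    have hage : (2:ℚ)^(((a ::ₘ b ::ₘ R).count 0 : ℤ) - i) ≤ a := ha.resolve_left ha0
    have hbge : (2:ℚ)^(((a ::ₘ b ::ₘ R).count 0 : ℤ) - i) ≤ b := hb.resolve_left hb0
    have hz : ((a ::ₘ b ::ₘ R).count 0 : ℤ) = R.count 0 := by
      simp only [Multiset.count_cons]
      rw [if_neg (show ¬(0:ℚ) = b from fun h => hb0 h.symm),
        if_neg (show ¬(0:ℚ) = a from fun h => ha0 h.symm)]
      push_cast; ring
    have h2 : (0:ℚ) < 2^(((a ::ₘ b ::ₘ R).count 0 : ℤ) - i) := by positivity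
    have hmge' : (2:ℚ)^(((a ::ₘ b ::ₘ R).count 0 : ℤ) - i) ≤ m := by
      simp only [hm]; linarith
    have hmpos : 0 < m := lt_of_lt_of_le h2 hmge'
    have hzN : ((m ::ₘ m ::ₘ R).count 0 : ℤ) = R.count 0 := by
      simp only [Multiset.count_cons]
      rw [if_neg hmpos.ne]
      simp
    intro x hx
    simp only [Multiset.mem_cons] at hx
    rw [hzN, ← hz]
    rcases hx with rfl | rfl | hx
    · right; exact hmge'
    · right; exact hmge'
    · exact hR x hx

theorem stmt_12 (i j : ℕ) (M : Multiset ℚ)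
    (h : Relation.ReflTransGen MixStep
      (Multiset.replicate i 0 + Multiset.replicate j 1) M)
    (c : ℚ) (hc : c ∈ M) (γ : ℕ) (hc0 : 0 < c) (hcγ : c < 1/2^γ) :
    γ + 1 ≤ i := by
  have hinv : MixInv i M := by
    clear hc hc0 hcγ
    induction h with
    | refl =>
        intro x hx
        rw [Multiset.mem_add] at hx
        have hcount : ((Multiset.replicate i (0:ℚ) + Multiset.replicate j 1).count 0 : ℤ) = i := by
          simp [Multiset.count_replicate]
        rcases hx with hx | hx
    <;> rw [Multiset.eq_of_mem_replicate hx]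
        · left; rfl
        · right; rw [hcount]; simp
    | tail _ hstep ih => exact inv_step i hstep ih
  rcases hinv c hc with rfl | hge
  · exact absurd hc0 (lt_irrefl 0)
  · have h1 : (2:ℚ)^(-(i:ℤ)) ≤ c := by
      refine le_trans (zpow_le_zpow_right₀ (by norm_num) ?_) hge
      omega
    have h2 : (2:ℚ)^(-(i:ℤ)) < 2^(-(γ:ℤ)) := by
      calc (2:ℚ)^(-(i:ℤ)) ≤ c := h1
        _ < 1/2^γ := hcγ
        _ = 2^(-(γ:ℤ)) := by rw [zpow_neg, zpow_natCast]; ring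
    have := (zpow_lt_zpow_iff_right₀ (by norm_num : (1:ℚ) < 2)).mp h2
    omega
end

section
/- Let t_0 be a rational with 1/4 ≤ t_0 ≤ 3/4 and binary precision d_0, and suppose the recursion t_{s+1} = 4(t_s - l_s), with l_s chosen so that t_s lies in the middle section [l_s + 1/16, l_s + 3/16] of some interval [l_s, l_s + 1/4] with l_s ∈ {1/8, 2/8, 3/8, 4/8, 5/8}, is iterated until the current value has precision at most 3. If d_0 ≥ 4, then the recursion terminates after exactly ⌈(d_0 - 3)/2⌉ steps, and the terminal value has precision 2 or 3 and lies in {1/4, 3/8, 1/2, 5/8, 3/4}. -/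
theorem stmt_18 (t l : ℕ → ℚ) (d0 : ℕ) (a : ℤ) (ha : Odd a)
    (ht0 : t 0 = (a : ℚ)/2^d0) (h14 : 1/4 ≤ t 0) (h34 : t 0 ≤ 3/4)
    (hd0 : 4 ≤ d0)
    (N : ℕ) (hN : (N : ℤ) = ⌈((d0 : ℚ) - 3)/2⌉)
    (hrec : ∀ s < N, l s ∈ ({1/8, 2/8, 3/8, 4/8, 5/8} : Set ℚ) ∧
      l s + 1/16 ≤ t s ∧ t s ≤ l s + 3/16 ∧ t (s + 1) = 4*(t s - l s)) :
    (∀ s < N, ¬ ∃ n : ℤ, (2 : ℚ)^3 * t s = n) ∧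
    (∃ n : ℤ, (2 : ℚ)^3 * t N = n) ∧
    t N ∈ ({1/4, 3/8, 1/2, 5/8, 3/4} : Set ℚ) := by
  -- bounds on N
  have hle : ((d0 : ℚ) - 3)/2 ≤ (N : ℚ) := by
    have := Int.le_ceil (((d0 : ℚ) - 3)/2)
    rw [← hN] at this
    exact_mod_cast this
  have hlt : (N : ℚ) < ((d0 : ℚ) - 3)/2 + 1 := by
    have := Int.ceil_lt_add_one (((d0 : ℚ) - 3)/2)
    rw [← hN] at this
    exact_mod_cast this
  have h1 : (d0 : ℤ) - 3 ≤ 2 * (N : ℤ) := by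
    have : (d0 : ℚ) - 3 ≤ 2 * (N : ℚ) := by linarith
    exact_mod_cast this
  have h2 : 2 * (N : ℤ) < (d0 : ℤ) - 1 := by
    have : 2 * (N : ℚ) < (d0 : ℚ) - 1 := by linarith
    exact_mod_cast this
  have hNd : 2 * N + 2 ≤ d0 ∧ d0 ≤ 2 * N + 3 := by omega
  -- main invariant
  have key : ∀ s, s ≤ N → ∃ b : ℤ, Odd b ∧ t s = (b : ℚ) / 2 ^ (d0 - 2 * s) ∧
      1/4 ≤ t s ∧ t s ≤ 3/4 := by
    intro s
    induction s with
    | zero =>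
      intro _
      exact ⟨a, ha, by simpa using ht0, h14, h34⟩
    | succ s ih =>
      intro hs
      obtain ⟨b, hb, htb, _, _⟩ := ih (by omega)
      obtain ⟨hl, hl1, hl2, hstep⟩ := hrec s (by omega)
      obtain ⟨e, he⟩ : ∃ e, d0 - 2 * s = e + 4 := ⟨d0 - 2 * s - 4, by omega⟩
      have hd : d0 - 2 * (s + 1) = e + 2 := by omega
      obtain ⟨k, hk⟩ : ∃ k : ℤ, l s = (k : ℚ) / 8 := by
        rcases hl with h | h | h | h | h
        · exact ⟨1, by rw [h]; norm_num⟩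
        · exact ⟨2, by rw [h]; norm_num⟩
        · exact ⟨3, by rw [h]; norm_num⟩
        · exact ⟨4, by rw [h]; norm_num⟩
        · exact ⟨5, by rw [h]; norm_num⟩
      refine ⟨b - k * 2 ^ (e + 1), hb.sub_even ⟨k * 2 ^ e, by ring⟩, ?_, ?_, ?_⟩
      · rw [hstep, htb, he, hk, hd]
        push_cast
        field_simp
        ring
      · rw [hstep]; linarith
      · rw [hstep]; linarith
  refine ⟨?_, ?_⟩
  · intro s hs
    obtain ⟨b, hb, htb, _, _⟩ := key s hs.le
    obtain ⟨e, he⟩ : ∃ e, d0 - 2 * s = e + 4 := ⟨d0 - 2 * s - 4, by omega⟩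
    rintro ⟨n, hn⟩
    rw [htb, he] at hn
    have h8 : (b : ℚ) = (n : ℚ) * 2 ^ (e + 1) := by
      field_simp at hn
      linear_combination hn / 8
    have hbz : b = n * 2 ^ (e + 1) := by exact_mod_cast h8
    exact (Int.not_even_iff_odd.mpr hb) ⟨n * 2 ^ e, by rw [hbz]; ring⟩
  obtain ⟨b, hb, htb, hb1, hb2⟩ := key N le_rfl
  obtain ⟨j, hj⟩ := hb
  have hcase : d0 - 2 * N = 2 ∨ d0 - 2 * N = 3 := by omega
  rcases hcase with h | h
  · rw [h] at htb
    have hbl : (1 : ℚ) ≤ (b : ℚ) := by rw [htb] at hb1; norm_num at hb1 ⊢; linarith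
    have hbu : (b : ℚ) ≤ 3 := by rw [htb] at hb2; norm_num at hb2 ⊢; linarith
    have hbl' : (1 : ℤ) ≤ b := by exact_mod_cast hbl
    have hbu' : b ≤ 3 := by exact_mod_cast hbu
    have : b = 1 ∨ b = 3 := by omega
    rcases this with hb' | hb' <;> subst hb' <;> rw [htb]
    · exact ⟨⟨2, by norm_num⟩, by norm_num [Set.mem_insert_iff, Set.mem_singleton_iff]⟩
    · exact ⟨⟨6, by norm_num⟩, by norm_num [Set.mem_insert_iff, Set.mem_singleton_iff]⟩
  · rw [h] at htb
    have hbl : (2 : ℚ) ≤ (b : ℚ) := by rw [htb] at hb1; norm_num at hb1 ⊢; linarith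
    have hbu : (b : ℚ) ≤ 6 := by rw [htb] at hb2; norm_num at hb2 ⊢; linarith
    have hbl' : (2 : ℤ) ≤ b := by exact_mod_cast hbl
    have hbu' : b ≤ 6 := by exact_mod_cast hbu
    have : b = 3 ∨ b = 5 := by omega
    rcases this with hb' | hb' <;> subst hb' <;> rw [htb]
    · exact ⟨⟨3, by norm_num⟩, by norm_num [Set.mem_insert_iff, Set.mem_singleton_iff]⟩
    · exact ⟨⟨5, by norm_num⟩, by norm_num [Set.mem_insert_iff, Set.mem_singleton_iff]⟩
end
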